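/- arXiv:1907.11319 — 3 statements merged into one kernel-verified Lean document; each statement's English description precedes it below -/
import Mathlib

section
/- Let S : [0,∞) → ℝ be continuous, strictly convex, and twice continuously differentiable on (0,∞)\{1}, with one-sided derivatives S'(1⁻) ≤ S'(1⁺) at 1. Define L(ρ,p) = ρ S'(ρ) - S(ρ) + S(1) if ρ ≠ 1 and L(ρ,p) = p if ρ = 1, where p satisfies: p = S'(1⁻) if 0 ≤ ρ < 1, p ∈ [S'(1⁻), S'(1⁺)] if ρ = 1, and p = S'(1⁺) if ρ > 1. Then L is strictly monotone in ρ: if (ρ₁,p₁) and (ρ₂,p₂) are two admissible pairs with ρ₁ < ρ₂, then L(ρ₁,p₁) < L(ρ₂,p₂). -/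
/-- Strict monotonicity of the operator `L(ρ,p) = ρS'(ρ) - S(ρ) + S(1)` for `ρ ≠ 1`,
`L(1,p) = p`, over admissible pairs: if `ρ₁ < ρ₂` then `L(ρ₁,p₁) < L(ρ₂,p₂)`. -/
theorem stmt_5 (S S' : ℝ → ℝ) (a b : ℝ)
    (hScont : ContinuousOn S (Set.Ici 0))
    (hSconv : StrictConvexOn ℝ (Set.Ici 0) S)
    (hS' : ∀ ρ ∈ Set.Ioi (0:ℝ) \ {1}, HasDerivAt S (S' ρ) ρ)
    (ha : HasDerivWithinAt S a (Set.Iio 1) 1)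
    (hb : HasDerivWithinAt S b (Set.Ioi 1) 1)
    (hab : a ≤ b)
    (ρ₁ ρ₂ p₁ p₂ : ℝ) (hρ₁ : 0 ≤ ρ₁) (hρ₂ : 0 ≤ ρ₂)
    (hadm₁ : (ρ₁ < 1 → p₁ = a) ∧ (ρ₁ = 1 → p₁ ∈ Set.Icc a b) ∧ (1 < ρ₁ → p₁ = b))
    (hadm₂ : (ρ₂ < 1 → p₂ = a) ∧ (ρ₂ = 1 → p₂ ∈ Set.Icc a b) ∧ (1 < ρ₂ → p₂ = b))
    (h : ρ₁ < ρ₂) :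
    (if ρ₁ = 1 then p₁ else ρ₁ * S' ρ₁ - S ρ₁ + S 1) <
      (if ρ₂ = 1 then p₂ else ρ₂ * S' ρ₂ - S ρ₂ + S 1) := by
  -- unified slopes
  set q₁ : ℝ := if ρ₁ = 1 then p₁ else S' ρ₁ with hq₁
  set q₂ : ℝ := if ρ₂ = 1 then p₂ else S' ρ₂ with hq₂
  have hρ₂pos : 0 < ρ₂ := lt_of_le_of_lt hρ₁ h
  have hmem₁ : ρ₁ ∈ Set.Ici (0:ℝ) := hρ₁
  have hmem₂ : ρ₂ ∈ Set.Ici (0:ℝ) := hρ₂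
  -- strict subgradient at ρ₂ evaluated at ρ₁ : slope S ρ₁ ρ₂ < q₂
  have key₂ : slope S ρ₁ ρ₂ < q₂ := by
    by_cases h2 : ρ₂ = 1
    · subst h2
      have hpa : a ≤ p₂ := (hadm₂.2.1 rfl).1
      have := hSconv.slope_lt_of_hasDerivWithinAt_Iio hmem₁ hmem₂ h ha
      simp only [hq₂, if_pos rfl, if_true]
      linarith
    · have hd : HasDerivAt S (S' ρ₂) ρ₂ := hS' ρ₂ ⟨hρ₂pos, h2⟩
      have := hSconv.slope_lt_of_hasDerivAt hmem₁ hmem₂ h hd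
      simpa [hq₂, if_neg h2] using this
  -- slope inequality: S ρ₂ - S ρ₁ < q₂ * (ρ₂ - ρ₁)
  have hsub : S ρ₂ - S ρ₁ < q₂ * (ρ₂ - ρ₁) := by
    have hne : ρ₂ - ρ₁ > 0 := by linarith
    rw [slope_def_field, div_lt_iff₀ hne] at key₂
    linarith [key₂]
  -- monotonicity of slopes when ρ₁ > 0
  have hq : 0 < ρ₁ → q₁ < q₂ := by
    intro hpos
    have key₁ : q₁ < slope S ρ₁ ρ₂ := by
      by_cases h1 : ρ₁ = 1
      · subst h1
        have hpb : p₁ ≤ b := (hadm₁.2.1 rfl).2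
        have := hSconv.lt_slope_of_hasDerivWithinAt_Ioi hmem₁ hmem₂ h hb
        simp only [hq₁, if_pos rfl, if_true]
        linarith
      · have hd : HasDerivAt S (S' ρ₁) ρ₁ := hS' ρ₁ ⟨hpos, h1⟩
        have := hSconv.lt_slope_of_hasDerivAt hmem₁ hmem₂ h hd
        simpa [hq₁, if_neg h1] using this
    linarith
  -- rewrite both sides as ρ q - S ρ + S 1
  have e₁ : (if ρ₁ = 1 then p₁ else ρ₁ * S' ρ₁ - S ρ₁ + S 1)
      = ρ₁ * q₁ - S ρ₁ + S 1 := by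
    by_cases h1 : ρ₁ = 1
    · subst h1; simp [hq₁]
    · simp [hq₁, h1]
  have e₂ : (if ρ₂ = 1 then p₂ else ρ₂ * S' ρ₂ - S ρ₂ + S 1)
      = ρ₂ * q₂ - S ρ₂ + S 1 := by
    by_cases h2 : ρ₂ = 1
    · subst h2; simp [hq₂]
    · simp [hq₂, h2]
  rw [e₁, e₂]
  rcases eq_or_lt_of_le hρ₁ with h0 | h0
  · rw [← h0] at hsub ⊢; nlinarith [hsub]
  · have := hq h0; nlinarith
end

section
/- Let L and admissible pairs be as above. If (ρ₁,p₁) and (ρ₂,p₂) are admissible pairs with L(ρ₁,p₁) = L(ρ₂,p₂), then ρ₁ = ρ₂ and p₁ = p₂. -/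
open Set

/-- Monotonicity of `F ρ = ρ S' ρ - S ρ + S 1` on each side of 1. -/
lemma aux_F_mono (S S' : ℝ → ℝ)
    (hSconv : StrictConvexOn ℝ (Set.Ici 0) S)
    (hS' : ∀ ρ ∈ Set.Ioi (0:ℝ) \ {1}, HasDerivAt S (S' ρ) ρ)
    {x y : ℝ} (hx : 0 ≤ x) (hx1 : x ≠ 1) (hy1 : y ≠ 1) (hxy : x < y) :
    x * S' x - S x + S 1 < y * S' y - S y + S 1 := by
  have hy0 : 0 < y := lt_of_le_of_lt hx hxy
  have hdy := hS' y ⟨hy0, hy1⟩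
  have h1 : slope S x y < S' y :=
    hSconv.slope_lt_of_hasDerivAt hx hy0.le hxy hdy
  rw [slope_def_field, div_lt_iff₀ (by linarith)] at h1
  rcases eq_or_lt_of_le hx with h0 | h0
  · subst h0; nlinarith
  · have hdx := hS' x ⟨h0, hx1⟩
    have h2 : S' x < slope S x y :=
      hSconv.lt_slope_of_hasDerivAt hx hy0.le hxy hdx
    rw [slope_def_field, lt_div_iff₀ (by linarith)] at h2
    nlinarith

/-- For `0 ≤ ρ < 1`, `F ρ < a`. -/
lemma aux_F_lt_a (S S' : ℝ → ℝ) (a : ℝ)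
    (hSconv : StrictConvexOn ℝ (Set.Ici 0) S)
    (hS' : ∀ ρ ∈ Set.Ioi (0:ℝ) \ {1}, HasDerivAt S (S' ρ) ρ)
    (ha : HasDerivWithinAt S a (Set.Iio 1) 1)
    {ρ : ℝ} (hρ : 0 ≤ ρ) (hρ1 : ρ < 1) :
    ρ * S' ρ - S ρ + S 1 < a := by
  have h1 : slope S ρ 1 < a :=
    hSconv.slope_lt_of_hasDerivWithinAt_Iio hρ (by norm_num) hρ1 ha
  rw [slope_def_field, div_lt_iff₀ (by linarith)] at h1
  rcases eq_or_lt_of_le hρ with h0 | h0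
  · subst h0; nlinarith
  · have hdρ := hS' ρ ⟨h0, hρ1.ne⟩
    have h2 : S' ρ < slope S ρ 1 :=
      hSconv.lt_slope_of_hasDerivAt hρ (by norm_num) hρ1 hdρ
    rw [slope_def_field, lt_div_iff₀ (by linarith)] at h2
    nlinarith

/-- For `ρ > 1`, `b < F ρ`. -/
lemma aux_b_lt_F (S S' : ℝ → ℝ) (b : ℝ)
    (hSconv : StrictConvexOn ℝ (Set.Ici 0) S)
    (hS' : ∀ ρ ∈ Set.Ioi (0:ℝ) \ {1}, HasDerivAt S (S' ρ) ρ)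
    (hb : HasDerivWithinAt S b (Set.Ioi 1) 1)
    {ρ : ℝ} (hρ1 : 1 < ρ) :
    b < ρ * S' ρ - S ρ + S 1 := by
  have hρ0 : (0:ℝ) < ρ := by linarith
  have hdρ := hS' ρ ⟨hρ0, (by linarith : ρ ≠ 1)⟩
  have h1 : b < slope S 1 ρ :=
    hSconv.lt_slope_of_hasDerivWithinAt_Ioi (by norm_num) hρ0.le hρ1 hb
  have h2 : slope S 1 ρ < S' ρ :=
    hSconv.slope_lt_of_hasDerivAt (by norm_num) hρ0.le hρ1 hdρ
  rw [slope_def_field, lt_div_iff₀ (by linarith)] at h1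
  rw [slope_def_field, div_lt_iff₀ (by linarith)] at h2
  nlinarith

/-- Injectivity of `L` on admissible pairs: if `L(ρ₁,p₁) = L(ρ₂,p₂)` then
`ρ₁ = ρ₂` and `p₁ = p₂`. -/
theorem stmt_8 (S S' : ℝ → ℝ) (a b : ℝ)
    (hScont : ContinuousOn S (Set.Ici 0))
    (hSconv : StrictConvexOn ℝ (Set.Ici 0) S)
    (hS' : ∀ ρ ∈ Set.Ioi (0:ℝ) \ {1}, HasDerivAt S (S' ρ) ρ)
    (ha : HasDerivWithinAt S a (Set.Iio 1) 1)
    (hb : HasDerivWithinAt S b (Set.Ioi 1) 1)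
    (hab : a ≤ b)
    (ρ₁ ρ₂ p₁ p₂ : ℝ) (hρ₁ : 0 ≤ ρ₁) (hρ₂ : 0 ≤ ρ₂)
    (hadm₁ : (ρ₁ < 1 → p₁ = a) ∧ (ρ₁ = 1 → p₁ ∈ Set.Icc a b) ∧ (1 < ρ₁ → p₁ = b))
    (hadm₂ : (ρ₂ < 1 → p₂ = a) ∧ (ρ₂ = 1 → p₂ ∈ Set.Icc a b) ∧ (1 < ρ₂ → p₂ = b))
    (hL : (if ρ₁ = 1 then p₁ else ρ₁ * S' ρ₁ - S ρ₁ + S 1) =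
      (if ρ₂ = 1 then p₂ else ρ₂ * S' ρ₂ - S ρ₂ + S 1)) :
    ρ₁ = ρ₂ ∧ p₁ = p₂ := by
  obtain ⟨h₁a, h₁m, h₁b⟩ := hadm₁
  obtain ⟨h₂a, h₂m, h₂b⟩ := hadm₂
  rcases lt_trichotomy ρ₁ 1 with hc₁ | hc₁ | hc₁ <;>
    rcases lt_trichotomy ρ₂ 1 with hc₂ | hc₂ | hc₂
  · -- both < 1
    rw [if_neg hc₁.ne, if_neg hc₂.ne] at hL
    have : ρ₁ = ρ₂ := by
      rcases lt_trichotomy ρ₁ ρ₂ with h | h | h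
      · exact absurd hL (ne_of_lt (aux_F_mono S S' hSconv hS' hρ₁ hc₁.ne hc₂.ne h))
      · exact h
      · exact absurd hL.symm (ne_of_lt (aux_F_mono S S' hSconv hS' hρ₂ hc₂.ne hc₁.ne h))
    exact ⟨this, by rw [h₁a hc₁, h₂a hc₂]⟩
  · -- ρ₁ < 1, ρ₂ = 1
    rw [if_neg hc₁.ne, if_pos hc₂] at hL
    have := aux_F_lt_a S S' a hSconv hS' ha hρ₁ hc₁
    have := (h₂m hc₂).1
    linarith
  · -- ρ₁ < 1, ρ₂ > 1
    rw [if_neg hc₁.ne, if_neg hc₂.ne'] at hL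
    have := aux_F_lt_a S S' a hSconv hS' ha hρ₁ hc₁
    have := aux_b_lt_F S S' b hSconv hS' hb hc₂
    linarith
  · -- ρ₁ = 1, ρ₂ < 1
    rw [if_pos hc₁, if_neg hc₂.ne] at hL
    have := aux_F_lt_a S S' a hSconv hS' ha hρ₂ hc₂
    have := (h₁m hc₁).1
    linarith
  · -- both = 1
    rw [if_pos hc₁, if_pos hc₂] at hL
    exact ⟨hc₁.trans hc₂.symm, hL⟩
  · -- ρ₁ = 1, ρ₂ > 1
    rw [if_pos hc₁, if_neg hc₂.ne'] at hL
    have := aux_b_lt_F S S' b hSconv hS' hb hc₂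
    have := (h₁m hc₁).2
    linarith
  · -- ρ₁ > 1, ρ₂ < 1
    rw [if_neg hc₁.ne', if_neg hc₂.ne] at hL
    have := aux_F_lt_a S S' a hSconv hS' ha hρ₂ hc₂
    have := aux_b_lt_F S S' b hSconv hS' hb hc₁
    linarith
  · -- ρ₁ > 1, ρ₂ = 1
    rw [if_neg hc₁.ne', if_pos hc₂] at hL
    have := aux_b_lt_F S S' b hSconv hS' hb hc₁
    have := (h₂m hc₂).2
    linarith
  · -- both > 1
    rw [if_neg hc₁.ne', if_neg hc₂.ne'] at hL
    have : ρ₁ = ρ₂ := by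
      rcases lt_trichotomy ρ₁ ρ₂ with h | h | h
      · exact absurd hL (ne_of_lt (aux_F_mono S S' hSconv hS' hρ₁ hc₁.ne' hc₂.ne' h))
      · exact h
      · exact absurd hL.symm (ne_of_lt (aux_F_mono S S' hSconv hS' hρ₂ hc₂.ne' hc₁.ne' h))
    exact ⟨this, by rw [h₁b hc₁, h₂b hc₂]⟩
end

section
/- Let l > ln(3/2) + 1/2 and let A ∈ (0, l - 1/2) satisfy exp(A) - (1/2)exp(2A+1-2l) - 1 = 0. Define ρ : [0,l] → ℝ by ρ(x) = exp(A - x) for x ∈ [0,A), ρ(x) = 1 for x ∈ [A, A+1/2], and ρ(x) = exp(2A + 1 - 2x) for x ∈ (A+1/2, l]. Then ∫₀ˡ ρ(x) dx = 1, and the three sets {ρ < 1}, {ρ = 1}, {ρ > 1} each have positive Lebesgue measure. -/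
open MeasureTheory

/-- The explicit stationary profile `ρ` with `ρ(x) = exp(A-x)` on `[0,A)`, `ρ = 1` on
`[A, A+1/2]`, `ρ(x) = exp(2A+1-2x)` on `(A+1/2, l]` has unit mass, and the three sets
`{ρ < 1}`, `{ρ = 1}`, `{ρ > 1}` all have positive Lebesgue measure. -/
theorem stmt_13 (l A : ℝ) (hl : Real.log (3/2) + 1/2 < l)
    (hA : A ∈ Set.Ioo (0:ℝ) (l - 1/2))
    (hroot : Real.exp A - (1/2) * Real.exp (2*A + 1 - 2*l) - 1 = 0) :
    let ρ : ℝ → ℝ := fun x => if x < A then Real.exp (A - x)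
      else if x ≤ A + 1/2 then 1 else Real.exp (2*A + 1 - 2*x)
    (∫ x in (0:ℝ)..l, ρ x) = 1 ∧
    0 < volume {x ∈ Set.Icc (0:ℝ) l | ρ x < 1} ∧
    0 < volume {x ∈ Set.Icc (0:ℝ) l | ρ x = 1} ∧
    0 < volume {x ∈ Set.Icc (0:ℝ) l | 1 < ρ x} := by
  intro ρ
  obtain ⟨hA0, hAl⟩ := hA
  have h1 : A + 1/2 ≤ l := by linarith
  have hA0' : (0:ℝ) ≤ A := hA0.le
  -- equality of ρ with nice functions on each subinterval
  have c1 : Set.EqOn ρ (fun x => Real.exp (A - x)) (Set.uIcc (0:ℝ) A) := by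
    intro x hx
    rw [Set.uIcc_of_le hA0'] at hx
    by_cases h : x < A
    · simp only [ρ, if_pos h]
    · have hx' : x = A := le_antisymm hx.2 (not_lt.mp h)
      simp only [ρ, hx', lt_irrefl, if_false, if_neg, if_pos (by linarith : A ≤ A + 1/2)]
      simp
  have c2 : Set.EqOn ρ (fun _ => (1:ℝ)) (Set.uIcc A (A + 1/2)) := by
    intro x hx
    rw [Set.uIcc_of_le (by linarith)] at hx
    simp only [ρ, if_neg (not_lt.mpr hx.1), if_pos hx.2]
  have c3 : Set.EqOn ρ (fun x => Real.exp (2*A + 1 - 2*x)) (Set.uIcc (A + 1/2) l) := by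
    intro x hx
    rw [Set.uIcc_of_le h1] at hx
    by_cases h : x ≤ A + 1/2
    · have hx' : x = A + 1/2 := le_antisymm h hx.1
      have hz : 2*A + 1 - 2*x = 0 := by rw [hx']; ring
      simp only [ρ, if_neg (not_lt.mpr (by linarith : A ≤ x)), if_pos h]
      rw [hz, Real.exp_zero]
    · simp only [ρ, if_neg (not_lt.mpr (by linarith : A ≤ x)), if_neg h]
  -- integrability on each subinterval
  have cont1 : Continuous (fun x : ℝ => Real.exp (A - x)) := by continuity
  have cont3 : Continuous (fun x : ℝ => Real.exp (2*A + 1 - 2*x)) := by continuity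
  have int1 : IntervalIntegrable ρ volume 0 A := by
    refine (cont1.intervalIntegrable 0 A).congr ?_
    exact
      (fun x hx => (c1 (Set.uIoc_subset_uIcc hx)).symm)
  have int2 : IntervalIntegrable ρ volume A (A + 1/2) := by
    refine ((continuous_const : Continuous fun _ : ℝ => (1:ℝ)).intervalIntegrable _ _).congr ?_
    exact
      (fun x hx => (c2 (Set.uIoc_subset_uIcc hx)).symm)
  have int3 : IntervalIntegrable ρ volume (A + 1/2) l := by
    refine (cont3.intervalIntegrable _ _).congr ?_
    exact
      (fun x hx => (c3 (Set.uIoc_subset_uIcc hx)).symm)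
  -- values of the pieces
  have i1 : (∫ x in (0:ℝ)..A, ρ x) = Real.exp A - 1 := by
    rw [intervalIntegral.integral_congr c1,
      intervalIntegral.integral_comp_sub_left (fun x => Real.exp x) A]
    simp [integral_exp]
  have i2 : (∫ x in A..(A + 1/2), ρ x) = 1/2 := by
    rw [intervalIntegral.integral_congr c2]
    simp
  have i3 : (∫ x in (A + 1/2)..l, ρ x) = 1/2 - (1/2) * Real.exp (2*A + 1 - 2*l) := by
    rw [intervalIntegral.integral_congr c3]
    have hd : ∀ x ∈ Set.uIcc (A + 1/2) l,
        HasDerivAt (fun x => -(1/2) * Real.exp (2*A + 1 - 2*x))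
          (Real.exp (2*A + 1 - 2*x)) x := by
      intro x _
      have hinner : HasDerivAt (fun x : ℝ => 2*A + 1 - 2*x) (-2) x := by
        simpa using ((hasDerivAt_id x).const_mul 2).const_sub (2*A + 1)
      have h := (Real.hasDerivAt_exp (2*A + 1 - 2*x)).comp x hinner
      have h2 := h.const_mul (-(1/2))
      refine h2.congr_deriv ?_
      ring
    rw [intervalIntegral.integral_eq_sub_of_hasDerivAt hd (cont3.intervalIntegrable _ _)]
    have : 2*A + 1 - 2*(A + 1/2) = 0 := by ring
    rw [this, Real.exp_zero]
    ring
  constructor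
  · have split : (∫ x in (0:ℝ)..l, ρ x) =
        (∫ x in (0:ℝ)..A, ρ x) + (∫ x in A..(A + 1/2), ρ x) + (∫ x in (A + 1/2)..l, ρ x) := by
      rw [intervalIntegral.integral_add_adjacent_intervals int1 int2,
        intervalIntegral.integral_add_adjacent_intervals (int1.trans int2) int3]
    rw [split, i1, i2, i3]
    linarith
  refine ⟨?_, ?_, ?_⟩
  · -- {ρ < 1} ⊇ Ioc (A+1/2) l
    have hsub : Set.Ioc (A + 1/2) l ⊆ {x ∈ Set.Icc (0:ℝ) l | ρ x < 1} := by
      intro x hx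
      refine ⟨⟨by linarith [hx.1], hx.2⟩, ?_⟩
      have : ρ x = Real.exp (2*A + 1 - 2*x) :=
        c3 (Set.uIcc_of_le h1 ▸ (⟨hx.1.le, hx.2⟩ : x ∈ Set.Icc (A + 1/2) l))
      rw [this]
      exact Real.exp_lt_one_iff.mpr (by linarith [hx.1])
    calc (0:ENNReal) < volume (Set.Ioc (A + 1/2) l) := by
          rw [Real.volume_Ioc]; exact ENNReal.ofReal_pos.mpr (by linarith)
      _ ≤ _ := measure_mono hsub
  · -- {ρ = 1} ⊇ Icc A (A+1/2)
    have hsub : Set.Icc A (A + 1/2) ⊆ {x ∈ Set.Icc (0:ℝ) l | ρ x = 1} := by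
      intro x hx
      obtain ⟨hxa, hxb⟩ := hx
      have hmem : x ∈ Set.uIcc A (A + 1/2) := by
        rw [Set.uIcc_of_le (by linarith : A ≤ A + 1/2)]
        exact Set.mem_Icc.mpr ⟨hxa, hxb⟩
      exact ⟨⟨by linarith, by linarith⟩, c2 hmem⟩
    calc (0:ENNReal) < volume (Set.Icc A (A + 1/2)) := by
          rw [Real.volume_Icc]; exact ENNReal.ofReal_pos.mpr (by linarith)
      _ ≤ _ := measure_mono hsub
  · -- {1 < ρ} ⊇ Ico 0 A
    have hsub : Set.Ico (0:ℝ) A ⊆ {x ∈ Set.Icc (0:ℝ) l | 1 < ρ x} := by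
      intro x hx
      refine ⟨⟨hx.1, by linarith [hx.2]⟩, ?_⟩
      have : ρ x = Real.exp (A - x) := by simp only [ρ, if_pos hx.2]
      rw [this]
      simpa using Real.exp_lt_exp.mpr (show (0:ℝ) < A - x by linarith [hx.2])
    calc (0:ENNReal) < volume (Set.Ico (0:ℝ) A) := by
          rw [Real.volume_Ico]; exact ENNReal.ofReal_pos.mpr (by linarith)
      _ ≤ _ := measure_mono hsub
end
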